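/- Let q ≥ 0, k ≥ 0, and let a be a (k, qk+1)-arrangement. Then r ∈ D(r) for every zero position r, the sets D(r) over the qk+1 zero positions r are pairwise distinct, and they are linearly ordered by inclusion: for any two zero positions r ≠ s, either D(r) ⊊ D(s) or D(s) ⊊ D(r). -/

import Mathlib

/-- An interval (list of 0's and 1's) is `q`-good if its number of 0's (`false`)
strictly exceeds `q` times its number of 1's (`true`). -/
def QGood (q : ℕ) (I : List Bool) : Prop :=
  q * I.count true < I.count false

/-- The interval `(r, s]` of a cyclic arrangement `a : ZMod n → Bool`: the list
`a (r+1), …, a s` read cyclically, where `(r, r]` denotes the entire cycle. -/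
def interval {n : ℕ} (a : ZMod n → Bool) (r s : ZMod n) : List Bool :=
  (List.range (if s = r then n else (s - r).val)).map
    (fun j => a (r + ((j + 1 : ℕ) : ZMod n)))

/-- For a zero position `r`, `Dset q a r` is the set of zero positions `j` such
that the 0-interval `(r, j]` is `q`-good. -/
def Dset {n : ℕ} (q : ℕ) (a : ZMod n → Bool) (r : ZMod n) : Set (ZMod n) :=
  {j | a j = false ∧ QGood q (interval a r j)}

namespace DsetAux

def vv (q : ℕ) (b : Bool) : ℤ := if b then -(q : ℤ) else 1

lemma count_eq_sum (q : ℕ) (I : List Bool) :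
    ((I.map (vv q)).sum) = (I.count false : ℤ) - q * I.count true := by
  induction I with
  | nil => simp
  | cons b t ih =>
    cases b <;> simp [List.count_cons, vv, ih] <;> ring

lemma qgood_iff (q : ℕ) (I : List Bool) : QGood q I ↔ 0 < (I.map (vv q)).sum := by
  rw [QGood, count_eq_sum]
  zify
  constructor <;> intro h <;> linarith

lemma list_sum_range (f : ℕ → ℤ) (m : ℕ) :
    ((List.range m).map f).sum = ∑ j ∈ Finset.range m, f j := by
  induction m with
  | zero => simp
  | succ m ih => rw [List.range_succ, Finset.sum_range_succ]; simp [ih]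

variable {n : ℕ} [NeZero n]

lemma period_sum (f : ZMod n → ℤ) (c : ℕ) :
    ∑ j ∈ Finset.range n, f ((c + j : ℕ) : ZMod n) = ∑ x : ZMod n, f x := by
  refine Finset.sum_nbij' (fun j => ((c + j : ℕ) : ZMod n))
    (fun x => ((x - (c : ZMod n)).val)) (fun _ _ => Finset.mem_univ _)
    (fun x _ => Finset.mem_range.2 (ZMod.val_lt _)) ?_ ?_ (fun _ _ => rfl)
  · intro j hj
    have hj' := Finset.mem_range.1 hj
    push_cast
    rw [add_sub_cancel_left, ZMod.val_natCast_of_lt hj']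
  · intro x _
    push_cast
    rw [ZMod.natCast_val, ZMod.cast_id]
    ring

/-- step value at (cyclic) position `t`. -/
def g (q : ℕ) (a : ZMod n → Bool) (t : ℕ) : ℤ := vv q (a ((t : ℕ) : ZMod n))

/-- prefix sum of steps `1, …, x.val`. -/
def H (q : ℕ) (a : ZMod n → Bool) (x : ZMod n) : ℤ :=
  ∑ j ∈ Finset.range x.val, g q a (j + 1)

lemma g_period (q : ℕ) (a : ZMod n → Bool) (t : ℕ) : g q a (n + t) = g q a t := by
  simp [g]

lemma shifted_total (q : ℕ) (a : ZMod n → Bool) (c : ℕ) :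
    ∑ j ∈ Finset.range n, g q a (c + j) = ∑ x : ZMod n, vv q (a x) :=
  period_sum (fun x => vv q (a x)) c

lemma interval_sum (q : ℕ) (a : ZMod n → Bool) (r s : ZMod n) :
    ((interval a r s).map (vv q)).sum
      = H q a s - H q a r +
        (if r.val < s.val then 0 else ∑ x : ZMod n, vv q (a x)) := by
  have hterm : ∀ j : ℕ, vv q (a (r + ((j + 1 : ℕ) : ZMod n))) = g q a (r.val + j + 1) := by
    intro j
    unfold g
    congr 2
    push_cast
    rw [ZMod.natCast_val, ZMod.cast_id]
    ring
  rw [interval, List.map_map]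
  have hmain : ((List.range (if s = r then n else (s - r).val)).map
      (vv q ∘ fun j => a (r + ((j + 1 : ℕ) : ZMod n)))).sum
      = ∑ j ∈ Finset.range (if s = r then n else (s - r).val), g q a (r.val + j + 1) := by
    rw [list_sum_range]
    exact Finset.sum_congr rfl fun j _ => hterm j
  rw [hmain]
  rcases eq_or_ne s r with hsr | hsr
  · subst hsr
    rw [if_pos rfl, if_neg (lt_irrefl _)]
    have : ∑ j ∈ Finset.range n, g q a (s.val + j + 1)
        = ∑ j ∈ Finset.range n, g q a ((s.val + 1) + j) :=
      Finset.sum_congr rfl fun j _ => by congr 1; omega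
    rw [this, shifted_total]
    ring
  · rw [if_neg hsr]
    have hrn : r.val < n := ZMod.val_lt r
    have hsn : s.val < n := ZMod.val_lt s
    have hvalne : s.val ≠ r.val := fun h => hsr (ZMod.val_injective n h)
    rcases lt_or_gt_of_ne hvalne with hlt | hgt
    · -- s.val < r.val : wrap-around
      rw [if_neg (by omega)]
      have hval : (s - r).val = n + s.val - r.val := by
        have : s - r = ((n + s.val - r.val : ℕ) : ZMod n) := by
          rw [Nat.cast_sub (by omega)]
          push_cast
          rw [ZMod.natCast_val, ZMod.natCast_val, ZMod.cast_id, ZMod.cast_id,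
            ZMod.natCast_self]
          ring
        rw [this, ZMod.val_natCast_of_lt (by omega)]
      rw [hval, show n + s.val - r.val = (n - r.val) + s.val by omega,
        Finset.sum_range_add]
      have h1 : ∑ j ∈ Finset.range (n - r.val), g q a (r.val + j + 1)
          = ∑ j ∈ Finset.Ico r.val n, g q a (j + 1) := by
        rw [Finset.sum_Ico_eq_sum_range]
      have h2 : ∑ j ∈ Finset.range s.val, g q a (r.val + ((n - r.val) + j) + 1)
          = H q a s := by
        refine Finset.sum_congr rfl fun j _ => ?_
        have : r.val + ((n - r.val) + j) + 1 = n + (j + 1) := by omega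
        rw [this, g_period]
      rw [h1, h2, Finset.sum_Ico_eq_sub _ (le_of_lt hrn)]
      have h3 : ∑ j ∈ Finset.range n, g q a (j + 1)
          = ∑ x : ZMod n, vv q (a x) := by
        rw [← shifted_total q a 1]
        exact Finset.sum_congr rfl fun j _ => by congr 1; omega
      rw [h3]
      unfold H
      ring
    · -- r.val < s.val : no wrap
      rw [if_pos hgt]
      have hval : (s - r).val = s.val - r.val := ZMod.val_sub (le_of_lt hgt)
      rw [hval]
      have h1 : ∑ j ∈ Finset.range (s.val - r.val), g q a (r.val + j + 1)
          = ∑ j ∈ Finset.Ico r.val s.val, g q a (j + 1) := by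
        rw [Finset.sum_Ico_eq_sum_range]
      rw [h1, Finset.sum_Ico_eq_sub _ (le_of_lt hgt)]
      unfold H
      ring



lemma mem_dset_iff {n : ℕ} [NeZero n] (q : ℕ) (a : ZMod n → Bool)
    (htot : ∑ x : ZMod n, vv q (a x) = 1) (r j : ZMod n) :
    j ∈ Dset q a r ↔
      a j = false ∧ H q a r + (if r.val < j.val then 1 else 0) ≤ H q a j := by
  rw [Dset, Set.mem_setOf_eq, qgood_iff, interval_sum, htot]
  refine and_congr_right fun _ => ?_
  split_ifs <;> constructor <;> intro h <;> linarith

lemma total_eq_one (q k : ℕ) (a : ZMod ((q + 1) * k + 1) → Bool)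
    (hones : Nat.card {i : ZMod ((q + 1) * k + 1) | a i = true} = k) :
    ∑ x : ZMod ((q + 1) * k + 1), vv q (a x) = 1 := by
  rw [Nat.card_coe_set_eq, Set.ncard_eq_toFinset_card', Set.toFinset_setOf] at hones
  have hcards : (Finset.univ.filter (fun i : ZMod ((q+1)*k+1) => a i = true)).card +
      (Finset.univ.filter (fun i : ZMod ((q+1)*k+1) => ¬ a i = true)).card
        = (q+1)*k+1 := by
    rw [Finset.card_filter_add_card_filter_not, Finset.card_univ, ZMod.card]
  have hexp : (q+1)*k = q*k + k := by ring
  have hcard2 : (Finset.univ.filter (fun i : ZMod ((q+1)*k+1) => ¬ a i = true)).card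
      = q*k+1 := by omega
  rw [← Finset.sum_filter_add_sum_filter_not Finset.univ (fun i => a i = true)
    (fun x => vv q (a x))]
  have h1 : ∑ x ∈ Finset.univ.filter (fun i : ZMod ((q+1)*k+1) => a i = true),
      vv q (a x) = ∑ _x ∈ Finset.univ.filter (fun i : ZMod ((q+1)*k+1) => a i = true),
      (-(q:ℤ)) :=
    Finset.sum_congr rfl fun x hx => by simp [vv, (Finset.mem_filter.1 hx).2]
  have h2 : ∑ x ∈ Finset.univ.filter (fun i : ZMod ((q+1)*k+1) => ¬ a i = true),
      vv q (a x) = ∑ _x ∈ Finset.univ.filter (fun i : ZMod ((q+1)*k+1) => ¬ a i = true),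
      (1:ℤ) :=
    Finset.sum_congr rfl fun x hx => by
      have := (Finset.mem_filter.1 hx).2
      simp only [Bool.not_eq_true] at this
      simp [vv, this]
  rw [h1, h2, Finset.sum_const, Finset.sum_const, hones, hcard2]
  push_cast [nsmul_eq_mul, smul_eq_mul]; ring

end DsetAux

/-- Let `a` be a `(k, qk+1)`-arrangement. Then `r ∈ D(r)` for every zero position `r`,
the sets `D(r)` over the zero positions are pairwise distinct, and they are linearly
ordered by inclusion: for zero positions `r ≠ s`, either `D(r) ⊊ D(s)` or `D(s) ⊊ D(r)`. -/
theorem Dsets_distinct_and_nested (q k : ℕ) (a : ZMod ((q + 1) * k + 1) → Bool)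
    (hones : Nat.card {i : ZMod ((q + 1) * k + 1) | a i = true} = k) :
    (∀ r : ZMod ((q + 1) * k + 1), a r = false → r ∈ Dset q a r) ∧
      (∀ r s : ZMod ((q + 1) * k + 1), a r = false → a s = false → r ≠ s →
        Dset q a r ≠ Dset q a s) ∧
      (∀ r s : ZMod ((q + 1) * k + 1), a r = false → a s = false → r ≠ s →
        Dset q a r ⊂ Dset q a s ∨ Dset q a s ⊂ Dset q a r) := by
  have htot := DsetAux.total_eq_one q k a hones
  have hmem := DsetAux.mem_dset_iff q a htot
  have part1 : ∀ r : ZMod ((q + 1) * k + 1), a r = false → r ∈ Dset q a r := by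
    intro r hr
    rw [hmem]
    exact ⟨hr, by simp⟩
  have key : ∀ r s : ZMod ((q + 1) * k + 1), a r = false → a s = false →
      r.val < s.val → Dset q a r ⊂ Dset q a s ∨ Dset q a s ⊂ Dset q a r := by
    intro r s hr hs hlt
    by_cases hH : DsetAux.H q a r < DsetAux.H q a s
    · right
      rw [Set.ssubset_def]
      constructor
      · intro j hj
        rw [hmem] at hj ⊢
        refine ⟨hj.1, ?_⟩
        have h2 := hj.2
        split_ifs at h2 ⊢ <;> first | linarith | omega
      · intro hsub
        have hmemr := hsub (part1 r hr)
        rw [hmem] at hmemr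
        have h2 := hmemr.2
        rw [if_neg (by omega)] at h2
        linarith
    · left
      have hH' := not_lt.1 hH
      rw [Set.ssubset_def]
      constructor
      · intro j hj
        rw [hmem] at hj ⊢
        refine ⟨hj.1, ?_⟩
        have h2 := hj.2
        split_ifs at h2 ⊢ <;> first | linarith | omega
      · intro hsub
        have hmems := hsub (part1 s hs)
        rw [hmem] at hmems
        have h2 := hmems.2
        rw [if_pos hlt] at h2
        linarith
  have part3 : ∀ r s : ZMod ((q + 1) * k + 1), a r = false → a s = false → r ≠ s →
      Dset q a r ⊂ Dset q a s ∨ Dset q a s ⊂ Dset q a r := by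
    intro r s hr hs hne
    have hv : r.val ≠ s.val := fun h => hne (ZMod.val_injective _ h)
    rcases hv.lt_or_gt with h | h
    · exact key r s hr hs h
    · exact (key s r hs hr h).symm
  refine ⟨part1, ?_, part3⟩
  intro r s hr hs hne heq
  rcases part3 r s hr hs hne with h | h <;> rw [Set.ssubset_def] at h
  · exact h.2 (by rw [heq])
  · exact h.2 (by rw [heq])
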